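/- Let K ⊆ ℝ^k be a nonempty closed set, let μ be a finite Borel measure on K, let f_0, f_1, …, f_p be real-valued Borel-measurable functions on K that are μ-integrable, and let K_0, K_1, …, K_p be Borel-measurable subsets of K. Then there exists an atomic Borel measure μ' on K supported on at most p+2 points, i.e., μ' = Σ_{j=1}^{p+2} w_j δ_{x_j} with weights w_j ≥ 0 and points x_j ∈ K, such that ∫_{K_i} f_i(z) dμ(z) = ∫_{K_i} f_i(z) dμ'(z) for all i = 0, …, p. -/

import Mathlib

open MeasureTheory
open scoped NNReal ENNReal

noncomputable section

open Set

set_option maxHeartbeats 1000000 in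
theorem integral_mem_convexHull_of_conull {α : Type*} [MeasurableSpace α] {n : ℕ}
    (μ : Measure α) [IsProbabilityMeasure μ] {g : α → Fin n → ℝ}
    (hgm : Measurable g) (hgi : Integrable g μ)
    {T : Set α} (hT : MeasurableSet T) (hTc : μ Tᶜ = 0) :
    (∫ x, g x ∂μ) ∈ convexHull ℝ (g '' T) := by
  set b := ∫ x, g x ∂μ with hbdef
  suffices key : ∀ d : ℕ, ∀ T : Set α, MeasurableSet T → μ Tᶜ = 0 →
      Module.finrank ℝ (Submodule.span ℝ ((fun y => y - b) '' (g '' T))) ≤ d →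
      b ∈ convexHull ℝ (g '' T) from key _ T hT hTc le_rfl
  intro d
  induction d using Nat.strong_induction_on with
  | _ d IH =>
  intro T hT hTc hrank
  by_contra hb
  set W : Submodule ℝ (Fin n → ℝ) := Submodule.span ℝ ((fun y => y - b) '' (g '' T)) with hWdef
  have hTae : ∀ᵐ x ∂μ, x ∈ T := by
    rw [MeasureTheory.ae_iff]
    exact hTc
  set C : Set (Fin n → ℝ) := convexHull ℝ (g '' T) with hCdef
  have hCconv : Convex ℝ C := convex_convexHull ℝ _
  have hbcl : b ∈ closure C := by
    refine hCconv.closure.integral_mem isClosed_closure ?_ hgi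
    exact hTae.mono fun x hx =>
      subset_closure (subset_convexHull ℝ _ (mem_image_of_mem g hx))
  -- C is contained in the affine subspace b + W
  have hCsub : ∀ y ∈ C, y - b ∈ W := by
    intro y hy
    have : C ⊆ AffineSubspace.mk' b W := by
      apply convexHull_min ?_ (AffineSubspace.mk' b W).convex
      rintro z ⟨t, ht, rfl⟩
      exact AffineSubspace.mem_mk'.2
        (Submodule.subset_span (mem_image_of_mem _ (mem_image_of_mem g ht)))
    exact AffineSubspace.mem_mk'.1 (this hy)
  -- move to the subspace W
  set D : Set W := {w : W | (w : Fin n → ℝ) + b ∈ C} with hDdef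
  have hDconv : Convex ℝ D := by
    have h1 : Convex ℝ ((fun y : Fin n → ℝ => y + b) ⁻¹' C) := by
      have := hCconv.translate_preimage_right b
      simpa [add_comm] using this
    exact h1.linear_preimage W.subtype
  have h0notin : (0 : W) ∉ D := by
    intro h
    exact hb (by simpa [hDdef] using h)
  have himg : (Subtype.val '' D : Set (Fin n → ℝ)) = (fun y => y - b) '' C := by
    ext y
    constructor
    · rintro ⟨⟨z, hz⟩, hzD, rfl⟩
      exact ⟨z + b, hzD, by simp⟩
    · rintro ⟨c, hc, rfl⟩
      exact ⟨⟨c - b, hCsub c hc⟩, by simpa [hDdef] using hc, rfl⟩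
  have h0cl : (0 : W) ∈ closure D := by
    have e : Topology.IsEmbedding (Subtype.val : W → Fin n → ℝ) := Topology.IsEmbedding.subtypeVal
    rw [e.closure_eq_preimage_closure_image]
    show (0 : Fin n → ℝ) ∈ closure (Subtype.val '' D)
    rw [himg]
    have hmap : (fun y => y - b) '' closure C = closure ((fun y => y - b) '' C) :=
      (Homeomorph.subRight b).image_closure C
    rw [← hmap]
    exact ⟨b, hbcl, sub_self b⟩
  have hspanD : Submodule.span ℝ D = (⊤ : Submodule ℝ W) := by
    apply Submodule.map_injective_of_injective W.injective_subtype
    rw [Submodule.map_span, Submodule.map_top, Submodule.range_subtype]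
    show Submodule.span ℝ (Subtype.val '' D) = W
    rw [himg]
    apply le_antisymm
    · rw [Submodule.span_le]
      rintro y ⟨c, hc, rfl⟩
      exact hCsub c hc
    · rw [hWdef]
      exact Submodule.span_mono (image_mono (subset_convexHull ℝ _))
  have hA : affineSpan ℝ D = (⊤ : AffineSubspace ℝ W) := by
    have hclosed : IsClosed ((affineSpan ℝ D : AffineSubspace ℝ W) : Set W) :=
      (affineSpan ℝ D).closed_of_finiteDimensional
    have h0A : (0 : W) ∈ affineSpan ℝ D := by
      have : closure D ⊆ (affineSpan ℝ D : Set W) := by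
        rw [← hclosed.closure_eq]
        exact closure_mono (subset_affineSpan ℝ D)
      exact this h0cl
    have hdir : ∀ w : W, w ∈ (affineSpan ℝ D).direction := by
      intro w
      have hw : w ∈ Submodule.span ℝ D := by rw [hspanD]; trivial
      have hle : Submodule.span ℝ D ≤ (affineSpan ℝ D).direction := by
        rw [Submodule.span_le]
        intro d hd
        have := AffineSubspace.vsub_mem_direction (subset_affineSpan ℝ D hd) h0A
        simpa using this
      exact hle hw
    ext w
    simp only [AffineSubspace.mem_top, iff_true]
    have := AffineSubspace.vadd_mem_of_mem_direction (hdir w) h0A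
    simpa using this
  have hint : (interior D).Nonempty := hDconv.interior_nonempty_iff_affineSpan_eq_top.mpr hA
  obtain ⟨ℓ, hℓ⟩ := geometric_hahn_banach_open_point hDconv.interior isOpen_interior
    (fun h => h0notin (interior_subset h))
  obtain ⟨y₀, hy₀⟩ := hint
  have hy₀0 : ℓ y₀ < ℓ 0 := hℓ _ hy₀
  have hle : ∀ w ∈ D, ℓ w ≤ ℓ 0 := by
    intro w hw
    by_contra hgt
    push_neg at hgt
    have h1 : ℓ y₀ < ℓ w := lt_trans hy₀0 hgt
    set t : ℝ := (ℓ w - ℓ 0) / (2 * (ℓ w - ℓ y₀)) with htdef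
    have ht0 : 0 < t := div_pos (by linarith) (by linarith)
    have ht1 : t ≤ 1 := by
      rw [div_le_one (by linarith)]
      linarith
    have hmem := hDconv.add_smul_sub_mem_interior hw hy₀ ⟨ht0, ht1⟩
    have hlt := hℓ _ hmem
    rw [map_add, ℓ.map_smul, map_sub, smul_eq_mul] at hlt
    have ht : t * (2 * (ℓ w - ℓ y₀)) = ℓ w - ℓ 0 :=
      div_mul_cancel₀ _ (by linarith)
    nlinarith [ht, hlt]
  -- extend ℓ to the ambient space
  obtain ⟨Q, hQ⟩ := Submodule.exists_isCompl W
  set Llin : (Fin n → ℝ) →ₗ[ℝ] ℝ :=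
    (ℓ : W →ₗ[ℝ] ℝ).comp (W.projectionOnto Q hQ) with hLlindef
  set L : (Fin n → ℝ) →L[ℝ] ℝ :=
    ⟨Llin, Llin.continuous_of_finiteDimensional⟩ with hLdef
  have hLW : ∀ w : W, L (w : Fin n → ℝ) = ℓ w := by
    intro w
    simp [hLdef, hLlindef, Submodule.projectionOnto_apply_left hQ w]
  set h : α → ℝ := fun t => L (g t - b) with hhdef
  have hgsub : Integrable (fun t => g t - b) μ := hgi.sub (integrable_const b)
  have hhi : Integrable h μ := L.integrable_comp hgsub
  have hℓ0 : ℓ 0 = 0 := map_zero ℓ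
  have hh0 : ∫ t, h t ∂μ = 0 := by
    rw [hhdef]
    rw [L.integral_comp_comm hgsub]
    rw [integral_sub hgi (integrable_const b), integral_const, probReal_univ,
      one_smul, ← hbdef, sub_self, map_zero]
  have hWgen : ∀ t ∈ T, g t - b ∈ W := fun t ht =>
    Submodule.subset_span (mem_image_of_mem _ (mem_image_of_mem g ht))
  have hhle : ∀ᵐ t ∂μ, h t ≤ 0 := by
    refine hTae.mono fun t ht => ?_
    have hWm : g t - b ∈ W := hWgen t ht
    have hmemD : (⟨g t - b, hWm⟩ : W) ∈ D := by
      simp only [hDdef, mem_setOf_eq, sub_add_cancel]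
      exact subset_convexHull ℝ _ (mem_image_of_mem g ht)
    show L (g t - b) ≤ 0
    rw [show g t - b = ((⟨g t - b, hWm⟩ : W) : Fin n → ℝ) from rfl, hLW, ← hℓ0]
    exact hle _ hmemD
  have hzero_ae : ∀ᵐ t ∂μ, h t = 0 := by
    have hneg : 0 ≤ᵐ[μ] fun t => -h t := hhle.mono fun t ht => neg_nonneg.2 ht
    have hint0 : ∫ t, -h t ∂μ = 0 := by rw [integral_neg, hh0, neg_zero]
    have := (integral_eq_zero_iff_of_nonneg_ae hneg hhi.neg).mp hint0
    exact this.mono fun t ht => by simpa using ht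
  have hhm : Measurable h := L.continuous.measurable.comp (hgm.sub measurable_const)
  set T' : Set α := T ∩ {t | h t = 0} with hT'def
  have hT'meas : MeasurableSet T' :=
    hT.inter (hhm (measurableSet_singleton 0))
  have hT'c : μ T'ᶜ = 0 := by
    rw [hT'def, Set.compl_inter]
    apply measure_union_null hTc
    have : μ {t | ¬ h t = 0} = 0 := by
      rw [← MeasureTheory.ae_iff]
      exact hzero_ae
    simpa [Set.compl_setOf] using this
  -- rank drop
  set W' : Submodule ℝ (Fin n → ℝ) :=
    Submodule.span ℝ ((fun y => y - b) '' (g '' T')) with hW'def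
  have hW'le : W' ≤ W ⊓ LinearMap.ker (L : (Fin n → ℝ) →ₗ[ℝ] ℝ) := by
    rw [hW'def, Submodule.span_le]
    rintro y ⟨z, ⟨t, ht', rfl⟩, rfl⟩
    refine ⟨hWgen t ht'.1, ?_⟩
    exact ht'.2
  have hy₀ne : L (y₀ : Fin n → ℝ) ≠ 0 := by
    rw [hLW y₀]
    rw [hℓ0] at hy₀0
    exact ne_of_lt hy₀0
  have hltW : W ⊓ LinearMap.ker (L : (Fin n → ℝ) →ₗ[ℝ] ℝ) < W := by
    refine lt_of_le_of_ne inf_le_left fun hEq => ?_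
    have : (y₀ : Fin n → ℝ) ∈ W ⊓ LinearMap.ker (L : (Fin n → ℝ) →ₗ[ℝ] ℝ) := by
      rw [hEq]; exact y₀.2
    exact hy₀ne this.2
  have hfr : Module.finrank ℝ W' < d := by
    calc Module.finrank ℝ W' ≤ Module.finrank ℝ (W ⊓ LinearMap.ker (L : (Fin n → ℝ) →ₗ[ℝ] ℝ) : Submodule ℝ (Fin n → ℝ)) :=
          Submodule.finrank_mono hW'le
      _ < Module.finrank ℝ W := Submodule.finrank_lt_finrank_of_lt hltW
      _ ≤ d := hrank
  have hmemb := IH (Module.finrank ℝ W') hfr T' hT'meas hT'c le_rfl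
  exact hb (convexHull_mono (image_mono inter_subset_left) hmemb)

theorem setIntegral_finset_sum_smul_dirac {δ : Type*} [MeasurableSpace δ]
    [MeasurableSingletonClass δ] {J : Type*} [Fintype J] (w : J → ℝ≥0) (x : J → δ)
    (S : Set δ) (f : δ → ℝ) :
    ∫ z in S, f z ∂(∑ j, (w j : ℝ≥0∞) • Measure.dirac (x j)) =
      ∑ j, (w j : ℝ) * S.indicator f (x j) := by
  classical
  have hres : (∑ j, (w j : ℝ≥0∞) • Measure.dirac (x j)).restrict S
      = ∑ j, ((w j : ℝ≥0∞) • (Measure.dirac (x j)).restrict S) := by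
    rw [← Measure.restrictₗ_apply, map_sum]
    refine Finset.sum_congr rfl fun j _ => ?_
    rw [LinearMap.map_smul, Measure.restrictₗ_apply]
  have hintj : ∀ j : J, Integrable f ((w j : ℝ≥0∞) • (Measure.dirac (x j)).restrict S) := by
    intro j
    rcases eq_or_ne (w j) 0 with h0 | h0
    · rw [h0]; simpa using (integrable_zero_measure (f := f))
    · rw [integrable_smul_measure (by exact_mod_cast h0) ENNReal.coe_ne_top]
      have : Integrable f (Measure.dirac (x j)) :=
        (integrable_const (f (x j))).congr (ae_eq_dirac f).symm
      rw [MeasureTheory.restrict_dirac]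
      split_ifs
      · exact this
      · exact integrable_zero_measure
  rw [hres, integral_finset_sum_measure fun j _ => hintj j]
  refine Finset.sum_congr rfl fun j _ => ?_
  rw [integral_smul_measure, ENNReal.coe_toReal, smul_eq_mul]
  congr 1
  rw [setIntegral_dirac f (x j) S, Set.indicator_apply]


set_option maxHeartbeats 1000000 in
/-- Rogosinski: given `p+1` integrable Borel functions and Borel subsets of a
closed set `K`, there is an atomic measure supported on at most `p+2` points of `K`
matching all the corresponding integrals. -/
theorem exists_atomic_measure_matching_integrals
    {k : ℕ} (p : ℕ) (K : Set (Fin k → ℝ)) (hKcl : IsClosed K) (hKne : K.Nonempty)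
    (μ : Measure (Fin k → ℝ)) [IsFiniteMeasure μ] (hμK : μ Kᶜ = 0)
    (f : Fin (p + 1) → (Fin k → ℝ) → ℝ)
    (hmeas : ∀ i, Measurable (f i)) (hint : ∀ i, Integrable (f i) μ)
    (Ks : Fin (p + 1) → Set (Fin k → ℝ))
    (hKs : ∀ i, MeasurableSet (Ks i) ∧ Ks i ⊆ K) :
    ∃ (w : Fin (p + 2) → ℝ≥0) (x : Fin (p + 2) → Fin k → ℝ),
      (∀ j, x j ∈ K) ∧
      ∀ i, (∫ z in Ks i, f i z ∂μ) =
        ∫ z in Ks i, f i z ∂(∑ j, (w j : ℝ≥0∞) • Measure.dirac (x j)) := by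
  classical
  obtain ⟨x₀, hx₀⟩ := hKne
  by_cases hμ0 : μ = 0
  · refine ⟨0, fun _ => x₀, fun _ => hx₀, fun i => ?_⟩
    have : (∑ j : Fin (p + 2), ((0 : ℝ≥0) : ℝ≥0∞) • Measure.dirac x₀) = 0 := by simp
    simp [hμ0, this]
  · have hc0 : μ Set.univ ≠ 0 := by simpa [Measure.measure_univ_eq_zero] using hμ0
    haveI : NeZero μ := ⟨hμ0⟩
    set ν : Measure (Fin k → ℝ) := (μ Set.univ)⁻¹ • μ with hν
    haveI : IsProbabilityMeasure ν := MeasureTheory.isProbabilityMeasureSMul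
    set g : (Fin k → ℝ) → (Fin (p + 1) → ℝ) := fun z i => (Ks i).indicator (f i) z with hg
    have hgm : Measurable g := measurable_pi_lambda _ fun i => (hmeas i).indicator (hKs i).1
    have hco : ∀ i, Integrable ((Ks i).indicator (f i)) μ := fun i =>
      (hint i).indicator (hKs i).1
    have hgiμ : Integrable g μ := by
      have hGi : Integrable (fun z => ∑ i, |(Ks i).indicator (f i) z|) μ :=
        integrable_finset_sum _ fun i _ => (hco i).abs
      refine hGi.mono' hgm.aestronglyMeasurable (Filter.Eventually.of_forall fun z => ?_)
      rw [pi_norm_le_iff_of_nonneg (by positivity)]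
      intro i
      rw [Real.norm_eq_abs]
      exact Finset.single_le_sum (f := fun i => |(Ks i).indicator (f i) z|)
        (fun i _ => abs_nonneg _) (Finset.mem_univ i)
    have hgiν : Integrable g ν :=
      hgiμ.smul_measure (ENNReal.inv_ne_top.2 hc0)
    have hνK : ν Kᶜ = 0 := by rw [hν]; simp [hμK]
    have hbmem := integral_mem_convexHull_of_conull ν hgm hgiν hKcl.measurableSet hνK
    set b : Fin (p + 1) → ℝ := ∫ z, g z ∂ν with hb
    obtain ⟨ι, hfin, z, wt, hrange, hindep, hpos, hsum1, hcenter⟩ :=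
      eq_pos_convex_span_of_mem_convexHull hbmem
    haveI := hfin
    rw [Subsingleton.elim hfin ‹Fintype ι›] at hcenter hsum1
    have hz : ∀ i : ι, ∃ y ∈ K, g y = z i := fun i => by
      rcases hrange (Set.mem_range_self i) with ⟨y, hy, hgy⟩; exact ⟨y, hy, hgy⟩
    choose X hXK hXz using hz
    set m := Fintype.card ι with hm
    have hcard : m ≤ p + 2 := by
      have h1 := hindep.card_le_finrank_succ
      have h2 : Module.finrank ℝ (vectorSpan ℝ (Set.range z)) ≤ p + 1 := by
        have h3 := Submodule.finrank_le (vectorSpan ℝ (Set.range z))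
        have h4 : Module.finrank ℝ (Fin (p + 1) → ℝ) = p + 1 := Module.finrank_fin_fun ℝ
        omega
      omega
    set e := Fintype.equivFin ι with he
    set r : ℝ := (μ Set.univ).toReal with hr
    have hrpos : 0 < r := ENNReal.toReal_pos hc0 (measure_ne_top μ _)
    set Wn : ℕ → ℝ≥0 := fun j =>
      if h : j < m then ⟨r * wt (e.symm ⟨j, h⟩), mul_nonneg hrpos.le (hpos _).le⟩ else 0
      with hWn
    set Xn : ℕ → (Fin k → ℝ) := fun j => if h : j < m then X (e.symm ⟨j, h⟩) else x₀ with hXn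
    refine ⟨fun j => Wn j, fun j => Xn j, fun j => ?_, fun i => ?_⟩
    · rw [hXn]
      dsimp only
      split_ifs
      · exact hXK _
      · exact hx₀
    · rw [setIntegral_finset_sum_smul_dirac]
      -- left side in terms of ν
      have hμr : μ.restrict (Ks i) = (μ Set.univ) • (ν.restrict (Ks i)) := by
        rw [hν, Measure.restrict_smul, smul_smul,
          ENNReal.mul_inv_cancel hc0 (measure_ne_top μ _), one_smul]
      have hLHS : ∫ z' in Ks i, f i z' ∂μ = r * ∫ z' in Ks i, f i z' ∂ν := by
        rw [show (∫ z' in Ks i, f i z' ∂μ) = ∫ z', f i z' ∂(μ.restrict (Ks i)) from rfl, hμr,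
          integral_smul_measure, hr, smul_eq_mul]
      -- ν-integral is the i-th coordinate of b
      have hbi : ∫ z' in Ks i, f i z' ∂ν = b i := by
        have hproj := (ContinuousLinearMap.proj (R := ℝ)
          (φ := fun _ : Fin (p + 1) => ℝ) i).integral_comp_comm hgiν
        have : ∫ z', g z' i ∂ν = b i := by
          simpa [ContinuousLinearMap.proj_apply] using hproj
        rw [← this, ← integral_indicator (hKs i).1]
      -- b i as a finite convex combination
      have hbsum : b i = ∑ i' : ι, wt i' * g (X i') i := by
        have := congrFun hcenter i
        rw [← this, Finset.sum_apply]
        refine Finset.sum_congr rfl fun i' _ => ?_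
        rw [Pi.smul_apply, smul_eq_mul, hXz]
      rw [hLHS, hbi, hbsum, Finset.mul_sum]
      -- now massage the right-hand sum
      have hterm : ∀ j : Fin (p + 2),
          ((Wn j : ℝ≥0) : ℝ) * (Ks i).indicator (f i) (Xn j) =
          (fun jn : ℕ => ((Wn jn : ℝ≥0) : ℝ) * (Ks i).indicator (f i) (Xn jn)) (j : ℕ) := by
        intro j; rfl
      rw [Finset.sum_congr rfl fun j _ => hterm j,
        Fin.sum_univ_eq_sum_range (fun jn => ((Wn jn : ℝ≥0) : ℝ) * (Ks i).indicator (f i) (Xn jn))]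
      rw [← Finset.sum_subset (Finset.range_subset_range.2 hcard) (fun jn _ hjn => by
        have hjm : ¬ jn < m := by simpa using hjn
        rw [hWn]
        have h0 : Wn jn = 0 := dif_neg hjm
        show ((Wn jn : ℝ≥0) : ℝ) * (Ks i).indicator (f i) (Xn jn) = 0
        rw [h0]; simp)]
      rw [← Fin.sum_univ_eq_sum_range (fun jn => ((Wn jn : ℝ≥0) : ℝ) * (Ks i).indicator (f i) (Xn jn)) m]
      rw [← Equiv.sum_comp e (fun j : Fin m => ((Wn j : ℝ≥0) : ℝ) * (Ks i).indicator (f i) (Xn j))]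
      refine Finset.sum_congr rfl fun i' _ => ?_
      have hlt : ((e i' : Fin m) : ℕ) < m := (e i').2
      rw [hWn, hXn]
      dsimp only
      have hWe : ((Wn ((e i' : Fin m) : ℕ) : ℝ≥0) : ℝ) = r * wt (e.symm ⟨_, hlt⟩) := by
        rw [show Wn ((e i' : Fin m) : ℕ) = ⟨r * wt (e.symm ⟨_, hlt⟩), mul_nonneg hrpos.le (hpos _).le⟩ from dif_pos hlt]
        rfl
      show r * (wt i' * g (X i') i) = ((Wn ((e i' : Fin m) : ℕ) : ℝ≥0) : ℝ) * (Ks i).indicator (f i) (Xn ((e i' : Fin m) : ℕ))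
      rw [hWe, show Xn ((e i' : Fin m) : ℕ) = X (e.symm ⟨_, hlt⟩) from dif_pos hlt]
      have hsymm : e.symm ⟨((e i' : Fin m) : ℕ), hlt⟩ = i' := by
        have : (⟨((e i' : Fin m) : ℕ), hlt⟩ : Fin m) = e i' := by ext; rfl
        rw [this, Equiv.symm_apply_apply]
      rw [hsymm]
      have hind : (Ks i).indicator (f i) (X i') = g (X i') i := rfl
      rw [hind]
      push_cast
      ring
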